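/- The asymmetric shift coefficient a_t = √(α_{t-1})·√(1-α_t)/√(α_t) satisfies a_t = √((1-α_t)/(1-β_t)) ≥ √(1-α_{t-1}) > 0 when α_{t-1} < 1; in particular the asymmetric process change dominates (in absolute value) the symmetric-process change c_t = √(1-α_{t-1}) - √((1-α_t)/(1-β_t)). -/

import Mathlib

/-- The asymmetric shift coefficient `aₜ = √(α_{t-1})√(1-αₜ)/√(αₜ)` equals
`√((1-αₜ)/(1-βₜ))`, is at least `√(1-α_{t-1}) > 0`, and dominates `|cₜ|`. -/
theorem stmt_5 (β αp αt : ℝ) (hβ0 : 0 < β) (hβ1 : β < 1)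
    (hαp0 : 0 < αp) (hαp1 : αp < 1) (hαt : αt = αp * (1 - β)) :
    Real.sqrt αp * Real.sqrt (1 - αt) / Real.sqrt αt = Real.sqrt ((1 - αt) / (1 - β)) ∧
    Real.sqrt (1 - αp) ≤ Real.sqrt αp * Real.sqrt (1 - αt) / Real.sqrt αt ∧
    0 < Real.sqrt αp * Real.sqrt (1 - αt) / Real.sqrt αt ∧
    |Real.sqrt (1 - αp) - Real.sqrt ((1 - αt) / (1 - β))|
      ≤ Real.sqrt αp * Real.sqrt (1 - αt) / Real.sqrt αt := by
  have hb : 0 < 1 - β := by linarith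
  have hαt0 : 0 < αt := by rw [hαt]; positivity
  have hαt1 : αt < 1 := by nlinarith
  have h1αt : 0 < 1 - αt := by linarith
  have heq2 : (1 - αt) / (1 - β) = αp * (1 - αt) / αt := by
    rw [hαt]; field_simp
  have heq : Real.sqrt αp * Real.sqrt (1 - αt) / Real.sqrt αt
      = Real.sqrt ((1 - αt) / (1 - β)) := by
    rw [heq2, Real.sqrt_div (by positivity), Real.sqrt_mul hαp0.le]
  have hle : Real.sqrt (1 - αp) ≤ Real.sqrt ((1 - αt) / (1 - β)) := by
    apply Real.sqrt_le_sqrt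
    rw [le_div_iff₀ hb]; nlinarith
  have hpos : 0 < Real.sqrt ((1 - αt) / (1 - β)) :=
    Real.sqrt_pos.mpr (by positivity)
  refine ⟨heq, ?_, ?_, ?_⟩
  · rw [heq]; exact hle
  · rw [heq]; exact hpos
  · rw [heq, abs_of_nonpos (by linarith)]
    have := Real.sqrt_nonneg (1 - αp)
    linarith
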